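/- Let Ω be a countably infinite set. S_{1,2,3,4,5} is a maximal subsemigroup of each of S_{1,2,3,4}, S_{1,2,3,5}, S_{1,2,4,5}, S_{1,3,4,5}, and S_{2,3,4,5}; that is, for each four-element subset I of {1,2,3,4,5} there is no subsemigroup T of Ω^Ω with S_{1,2,3,4,5} ⊊ T ⊊ S_I. -/

import Mathlib

/-!
Setting: `Ω` is a countably infinite set, `Function.End Ω = Ω → Ω` is the full
transformation semigroup (a subset is closed under composition in one order iff
it is closed in the other, so the lattice of subsemigroups is unaffected by the
left-to-right convention of the paper).
-/

open Cardinal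

/-- A transversal of `f`: a set on which `f` is injective and whose image is all of `Ωf`. -/
def IsTransversal {Ω : Type*} (f : Ω → Ω) (T : Set Ω) : Prop :=
  Set.InjOn f T ∧ f '' T = Set.range f

/-- The defect `d(f) = |Ω \ Ωf|`. -/
noncomputable def defect {Ω : Type*} (f : Ω → Ω) : Cardinal :=
  #((Set.range f)ᶜ : Set Ω)

/-- The collapse `c(f) = |Ω \ Σ|` for a transversal `Σ` of `f` (the value is
independent of the choice of transversal, so the infimum is the common value). -/
noncomputable def collapse {Ω : Type*} (f : Ω → Ω) : Cardinal :=
  ⨅ T : {T : Set Ω // IsTransversal f T}, #(T.1ᶜ : Set Ω)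

/-- The infinite contraction index `k(f) = |{α : αf⁻¹ infinite}|`. -/
noncomputable def contract {Ω : Type*} (f : Ω → Ω) : Cardinal :=
  #({α : Ω | (f ⁻¹' {α}).Infinite} : Set Ω)

def S1 {Ω : Type*} : Set (Function.End Ω) := {f | collapse f = 0 ∨ 0 < defect f}
def S2 {Ω : Type*} : Set (Function.End Ω) := {f | 0 < collapse f ∨ defect f = 0}
def S3 {Ω : Type*} : Set (Function.End Ω) := {f | collapse f < ℵ₀ ∨ ℵ₀ ≤ defect f}
def S4 {Ω : Type*} : Set (Function.End Ω) := {f | ℵ₀ ≤ collapse f ∨ defect f < ℵ₀}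
def S5 {Ω : Type*} : Set (Function.End Ω) := {f | contract f < ℵ₀}

/-- `Sym(Ω)`, the bijections of `Ω`. -/
def SymOmega {Ω : Type*} : Set (Function.End Ω) := {f | Function.Bijective f}

/-- `U = {f : d(f) = ∞ or 0 < c(f) < ∞} ∪ Sym(Ω)`. -/
def SetU {Ω : Type*} : Set (Function.End Ω) :=
  {f | ℵ₀ ≤ defect f ∨ (0 < collapse f ∧ collapse f < ℵ₀)} ∪ SymOmega

/-- `V = {f : c(f) = ∞ or 0 < d(f) < ∞} ∪ Sym(Ω)`. -/
def SetV {Ω : Type*} : Set (Function.End Ω) :=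
  {f | ℵ₀ ≤ collapse f ∨ (0 < defect f ∧ defect f < ℵ₀)} ∪ SymOmega

/-- `S_{1,2,3,4,5}`. -/
def S12345 {Ω : Type*} : Set (Function.End Ω) := S1 ∩ S2 ∩ S3 ∩ S4 ∩ S5

/-- The family `S_1, …, S_5` indexed by `Fin 5`. -/
def SS {Ω : Type*} : Fin 5 → Set (Function.End Ω) := ![S1, S2, S3, S4, S5]

section Aux
variable {Ω : Type}

lemma exists_isTransversal (f : Ω → Ω) : ∃ T, IsTransversal f T := by
  classical
  let s : Set.range f → Ω := fun y => y.2.choose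
  have hs : ∀ y : Set.range f, f (s y) = y.1 := fun y => y.2.choose_spec
  refine ⟨Set.range s, ?_, ?_⟩
  · rintro x ⟨y1, rfl⟩ x' ⟨y2, rfl⟩ h
    rw [hs y1, hs y2] at h
    rw [Subtype.ext h]
  · apply Set.eq_of_subset_of_subset
    · rintro y ⟨x, ⟨z, rfl⟩, rfl⟩; exact ⟨s z, rfl⟩
    · rintro y hy
      exact ⟨s ⟨y, hy⟩, ⟨⟨y, hy⟩, rfl⟩, hs ⟨y, hy⟩⟩

/-- removing one point from a set: cardinality independent of the point. -/
lemma mk_diff_singleton_eq (S : Set Ω) {a b : Ω} (ha : a ∈ S) (hb : b ∈ S) :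
    #(S \ {a} : Set Ω) = #(S \ {b} : Set Ω) := by
  classical
  have key : ∀ (u v : Ω), u ∈ S → v ∈ S →
      #(S \ {u} : Set Ω) ≤ #(S \ {v} : Set Ω) := by
    intro u v hu hv
    have hmem : ∀ x : (S \ {u} : Set Ω), (x : Ω) = v → u ∈ S \ {v} := by
      intro x hxv
      refine ⟨hu, fun h => ?_⟩
      apply x.2.2
      simp only [Set.mem_singleton_iff] at h ⊢
      rw [hxv, ← h]
    have hmem2 : ∀ x : (S \ {u} : Set Ω), (x : Ω) ≠ v → (x : Ω) ∈ S \ {v} := by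
      intro x hxv
      exact ⟨x.2.1, by simpa using hxv⟩
    refine Cardinal.mk_le_of_injective (f := fun x =>
      if h : (x : Ω) = v then ⟨u, hmem x h⟩ else ⟨x, hmem2 x h⟩) ?_
    intro x y h
    dsimp only at h
    by_cases hx : (x : Ω) = v
    · rw [dif_pos hx] at h
      by_cases hy : (y : Ω) = v
      · rw [dif_pos hy] at h
        exact Subtype.ext (hx.trans hy.symm)
      · rw [dif_neg hy] at h
        have : u = (y : Ω) := congrArg Subtype.val h
        exact absurd this.symm (by simpa using y.2.2)
    · rw [dif_neg hx] at h
      by_cases hy : (y : Ω) = v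
      · rw [dif_pos hy] at h
        have : (x : Ω) = u := congrArg Subtype.val h
        exact absurd this (by simpa using x.2.2)
      · rw [dif_neg hy] at h
        have : (x : Ω) = (y : Ω) := congrArg (fun z : (S \ {v} : Set Ω) => (z : Ω)) h
        exact Subtype.ext this
  exact le_antisymm (key a b ha hb) (key b a hb ha)

lemma fiber_inter_transversal {f : Ω → Ω} {T : Set Ω} (hT : IsTransversal f T)
    {y : Ω} (hy : y ∈ Set.range f) : ∃ t, t ∈ T ∧ f t = y ∧ ∀ t' ∈ T, f t' = y → t' = t := by
  have : y ∈ f '' T := hT.2.symm ▸ hy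
  obtain ⟨t, htT, htf⟩ := this
  exact ⟨t, htT, htf, fun t' ht' hf' => hT.1 ht' htT (by rw [hf', htf])⟩

/-- complement of a transversal decomposes as a sigma over fibers -/
lemma mk_compl_transversal {f : Ω → Ω} {T : Set Ω} (hT : IsTransversal f T) :
    #(Tᶜ : Set Ω) = Cardinal.sum
      (fun y : Set.range f => #((f ⁻¹' {y.1} ∩ Tᶜ) : Set Ω)) := by
  rw [← Cardinal.mk_sigma]
  refine Cardinal.mk_congr (Equiv.ofBijective
    (fun x => ⟨⟨f x.1, ⟨x.1, rfl⟩⟩, ⟨x.1, rfl, x.2⟩⟩) ⟨?_, ?_⟩)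
  · intro x y h
    exact Subtype.ext (congrArg (fun p : (Σ y : Set.range f,
      ((f ⁻¹' {y.1} ∩ Tᶜ) : Set Ω)) => (p.2 : Ω)) h)
  · rintro ⟨⟨y, hy⟩, ⟨x, hx1, hx2⟩⟩
    have hfx : f x = y := hx1
    subst hfx
    exact ⟨⟨x, hx2⟩, rfl⟩

lemma mk_compl_transversal_eq {f : Ω → Ω} {T₁ T₂ : Set Ω}
    (h1 : IsTransversal f T₁) (h2 : IsTransversal f T₂) :
    #(T₁ᶜ : Set Ω) = #(T₂ᶜ : Set Ω) := by
  rw [mk_compl_transversal h1, mk_compl_transversal h2]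
  congr 1
  funext y
  obtain ⟨t1, ht1T, ht1f, ht1u⟩ := fiber_inter_transversal h1 y.2
  obtain ⟨t2, ht2T, ht2f, ht2u⟩ := fiber_inter_transversal h2 y.2
  have e1 : (f ⁻¹' {y.1} ∩ T₁ᶜ) = (f ⁻¹' {y.1}) \ {t1} := by
    ext x
    simp only [Set.mem_inter_iff, Set.mem_preimage, Set.mem_singleton_iff, Set.mem_compl_iff,
      Set.mem_diff]
    constructor
    · rintro ⟨hx, hxT⟩
      exact ⟨hx, fun h => hxT (h ▸ ht1T)⟩
    · rintro ⟨hx, hxt⟩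
      exact ⟨hx, fun hT => hxt (ht1u x hT hx)⟩
  have e2 : (f ⁻¹' {y.1} ∩ T₂ᶜ) = (f ⁻¹' {y.1}) \ {t2} := by
    ext x
    simp only [Set.mem_inter_iff, Set.mem_preimage, Set.mem_singleton_iff, Set.mem_compl_iff,
      Set.mem_diff]
    constructor
    · rintro ⟨hx, hxT⟩
      exact ⟨hx, fun h => hxT (h ▸ ht2T)⟩
    · rintro ⟨hx, hxt⟩
      exact ⟨hx, fun hT => hxt (ht2u x hT hx)⟩
  rw [e1, e2]
  exact mk_diff_singleton_eq _ ht1f ht2f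

lemma collapse_eq_mk_compl {f : Ω → Ω} {T : Set Ω} (hT : IsTransversal f T) :
    collapse f = #(Tᶜ : Set Ω) := by
  refine le_antisymm (ciInf_le' _ (⟨T, hT⟩ : {T : Set Ω // IsTransversal f T})) ?_
  have : Nonempty {T : Set Ω // IsTransversal f T} := ⟨⟨T, hT⟩⟩
  exact le_ciInf fun T' => le_of_eq (mk_compl_transversal_eq hT T'.2)

lemma isTransversal_univ_of_injective {f : Ω → Ω} (hf : Function.Injective f) :
    IsTransversal f Set.univ :=
  ⟨fun x _ y _ h => hf h, by simp [Set.image_univ]⟩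

lemma collapse_eq_zero_iff {f : Ω → Ω} : collapse f = 0 ↔ Function.Injective f := by
  constructor
  · intro h
    obtain ⟨T, hT⟩ := exists_isTransversal f
    rw [collapse_eq_mk_compl hT, Cardinal.mk_eq_zero_iff] at h
    have hTu : T = Set.univ := by
      rw [Set.eq_univ_iff_forall]
      intro x
      by_contra hx
      exact h.elim' ⟨x, hx⟩
    intro x y hxy
    exact hT.1 (hTu ▸ Set.mem_univ x) (hTu ▸ Set.mem_univ y) hxy
  · intro hf
    rw [collapse_eq_mk_compl (isTransversal_univ_of_injective hf)]
    simp

lemma defect_eq_zero_iff {f : Ω → Ω} : defect f = 0 ↔ Function.Surjective f := by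
  rw [defect, Cardinal.mk_eq_zero_iff]
  constructor
  · intro h x
    by_contra hx
    exact h.elim' ⟨x, fun hh => hx hh⟩
  · intro h
    constructor
    rintro ⟨x, hx⟩
    exact hx (h x)

lemma aleph0_le_collapse_of_infinite_fiber {f : Ω → Ω} {α : Ω}
    (h : (f ⁻¹' {α}).Infinite) : ℵ₀ ≤ collapse f := by
  obtain ⟨T, hT⟩ := exists_isTransversal f
  rw [collapse_eq_mk_compl hT]
  rw [Cardinal.aleph0_le_mk_iff]
  -- fiber minus at most one point is inside Tᶜ
  have hsub : ∀ x ∈ f ⁻¹' {α}, ∀ y ∈ f ⁻¹' {α}, x ∈ T → y ∈ T → x = y := by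
    intro x hx y hy hxT hyT
    exact hT.1 hxT hyT (by rw [Set.mem_preimage, Set.mem_singleton_iff] at hx hy; rw [hx, hy])
  by_cases hex : ∃ x, x ∈ f ⁻¹' {α} ∧ x ∈ T
  · obtain ⟨x0, hx0f, hx0T⟩ := hex
    have : (f ⁻¹' {α} \ {x0}) ⊆ Tᶜ := by
      rintro y ⟨hyf, hyx⟩ hyT
      exact hyx (hsub y hyf x0 hx0f hyT hx0T)
    exact ((h.diff (Set.finite_singleton x0)).mono this).to_subtype
  · have : (f ⁻¹' {α}) ⊆ Tᶜ := fun y hy hyT => hex ⟨y, hy, hyT⟩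
    exact (h.mono this).to_subtype

lemma contract_eq_zero_of_collapse_lt {f : Ω → Ω} (h : collapse f < ℵ₀) :
    contract f = 0 := by
  rw [contract, Cardinal.mk_eq_zero_iff]
  constructor
  rintro ⟨α, hα⟩
  exact absurd h (not_lt.mpr (aleph0_le_collapse_of_infinite_fiber hα))

/-- transversal transfer along an equal-kernel map -/
lemma isTransversal_of_ker {a g : Ω → Ω} (hk : ∀ x x', a x = a x' ↔ g x = g x')
    {T : Set Ω} (hT : IsTransversal g T) : IsTransversal a T := by
  constructor
  · intro x hx y hy h
    exact hT.1 hx hy ((hk x y).mp h)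
  · apply Set.eq_of_subset_of_subset
    · rintro y ⟨x, _, rfl⟩; exact ⟨x, rfl⟩
    · rintro y ⟨x, rfl⟩
      have : g x ∈ g '' T := hT.2.symm ▸ ⟨x, rfl⟩
      obtain ⟨t, htT, htg⟩ := this
      exact ⟨t, htT, (hk t x).mpr htg⟩

lemma collapse_eq_of_ker {a g : Ω → Ω} (hk : ∀ x x', a x = a x' ↔ g x = g x') :
    collapse a = collapse g := by
  obtain ⟨T, hT⟩ := exists_isTransversal g
  rw [collapse_eq_mk_compl (isTransversal_of_ker hk hT), collapse_eq_mk_compl hT]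

lemma contract_le_of_ker {a g : Ω → Ω} (hk : ∀ x x', a x = a x' ↔ g x = g x') :
    contract a ≤ contract g := by
  classical
  have main : ∀ α : ({α : Ω | (a ⁻¹' {α}).Infinite} : Set Ω),
      ∃ β, (g ⁻¹' {β}).Infinite ∧ g ⁻¹' {β} = a ⁻¹' {α.1} := by
    rintro ⟨α, hα⟩
    obtain ⟨x, hx⟩ := (Set.Infinite.nonempty hα)
    have hx' : a x = α := hx
    refine ⟨g x, ?_, ?_⟩
    · have : g ⁻¹' {g x} = a ⁻¹' {α} := by
        ext y
        simp only [Set.mem_preimage, Set.mem_singleton_iff]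
        rw [← hx']
        exact (hk y x).symm
      rw [this]; exact hα
    · ext y
      simp only [Set.mem_preimage, Set.mem_singleton_iff]
      rw [← hx']
      exact (hk y x).symm
  refine Cardinal.mk_le_of_injective (f := fun α =>
    (⟨(main α).choose, (main α).choose_spec.1⟩ :
      ({β : Ω | (g ⁻¹' {β}).Infinite} : Set Ω))) ?_
  intro α α' h
  have h1 := (main α).choose_spec.2
  have h2 := (main α').choose_spec.2
  have hval : (main α).choose = (main α').choose :=
    congrArg (fun z : ({β : Ω | (g ⁻¹' {β}).Infinite} : Set Ω) => (z : Ω)) h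
  have hpre : a ⁻¹' {α.1} = a ⁻¹' {α'.1} := by rw [← h1, ← h2, hval]
  obtain ⟨x, hx⟩ := Set.Infinite.nonempty α.2
  have hx2 : x ∈ a ⁻¹' {α'.1} := hpre ▸ hx
  exact Subtype.ext ((Set.mem_preimage.mp hx).symm.trans (Set.mem_preimage.mp hx2))

/-- Lemma A: left factor construction. -/
lemma lemA [Nonempty Ω] (h g : Ω → Ω) (Hker : ∀ x x', h x = h x' ↔ g x = g x') :
    ∃ b : Ω → Ω, (∀ x, b (h x) = g x) ∧
      collapse b = #((Set.range h)ᶜ : Set Ω) ∧ defect b = defect g ∧ contract b ≤ 1 := by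
  classical
  obtain ⟨x0⟩ := (inferInstance : Nonempty Ω)
  set b : Ω → Ω := fun y => if hy : y ∈ Set.range h then g hy.choose else g x0 with hb
  have hbh : ∀ x, b (h x) = g x := by
    intro x
    have hy : h x ∈ Set.range h := ⟨x, rfl⟩
    rw [hb]
    simp only [dif_pos hy]
    exact (Hker _ _).mp hy.choose_spec
  have hrange : Set.range b = Set.range g := by
    apply Set.eq_of_subset_of_subset
    · rintro y ⟨z, rfl⟩
      by_cases hz : z ∈ Set.range h
      · simp only [hb, dif_pos hz]; exact ⟨_, rfl⟩
      · simp only [hb, dif_neg hz]; exact ⟨_, rfl⟩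
    · rintro y ⟨x, rfl⟩
      exact ⟨h x, hbh x⟩
  have hInj : Set.InjOn b (Set.range h) := by
    rintro y ⟨x, rfl⟩ y' ⟨x', rfl⟩ hby
    rw [hbh, hbh] at hby
    exact (Hker x x').mpr hby
  have hT : IsTransversal b (Set.range h) := by
    refine ⟨hInj, Set.eq_of_subset_of_subset (Set.image_subset_range _ _) ?_⟩
    rintro y ⟨z, rfl⟩
    by_cases hz : z ∈ Set.range h
    · obtain ⟨x, hx⟩ := hz
      exact ⟨h x, ⟨x, rfl⟩, by rw [hx]⟩
    · refine ⟨h x0, ⟨x0, rfl⟩, ?_⟩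
      rw [hbh]
      simp only [hb, dif_neg hz]
  refine ⟨b, hbh, collapse_eq_mk_compl hT, by rw [defect, defect, hrange], ?_⟩
  have hsub : ({α : Ω | (b ⁻¹' {α}).Infinite} : Set Ω) ⊆ {g x0} := by
    intro α hα
    have : ¬ (b ⁻¹' {α} ⊆ Set.range h) := by
      intro hss
      apply hα
      apply Set.Subsingleton.finite
      intro y hy y' hy'
      exact hInj (hss hy) (hss hy')
        ((Set.mem_preimage.mp hy).trans (Set.mem_preimage.mp hy').symm)
    obtain ⟨y, hy1, hy2⟩ := Set.not_subset.mp this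
    have : b y = α := hy1
    rw [← this]
    simp only [hb, dif_neg hy2, Set.mem_singleton_iff]
  calc contract b ≤ #({g x0} : Set Ω) := Cardinal.mk_le_mk_of_subset hsub
    _ = 1 := Cardinal.mk_singleton _

lemma sigma_infinite {f : Ω → Ω} [Infinite Ω] {T : Set Ω} (hT : IsTransversal f T)
    (hf : (Set.range f).Infinite ∨ collapse f < ℵ₀) : T.Infinite := by
  rcases hf with hf | hf
  · have hbij : Set.BijOn f T (Set.range f) :=
      ⟨fun x hx => ⟨x, rfl⟩, hT.1, fun y hy => hT.2 ▸ hy⟩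
    have : #(T : Set Ω) = #(Set.range f : Set Ω) := Cardinal.mk_congr (Set.BijOn.equiv f hbij)
    rw [← Set.infinite_coe_iff] at hf ⊢
    rw [← Cardinal.aleph0_le_mk_iff] at hf ⊢
    rw [this]; exact hf
  · rw [collapse_eq_mk_compl hT, Cardinal.lt_aleph0_iff_set_finite] at hf
    have := hf.infinite_compl
    rwa [compl_compl] at this

lemma lemB [Countable Ω] [Infinite Ω] (f g : Ω → Ω)
    (hrf : (Set.range f).Infinite ∨ collapse f < ℵ₀)
    (hrg : (Set.range g).Infinite) :
    ∃ a b : Ω → Ω, (∀ x, b (f (a x)) = g x) ∧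
      collapse a = collapse g ∧ defect a = collapse f ∧ contract a ≤ contract g ∧
      collapse b = defect f ∧ defect b = defect g ∧ contract b ≤ 1 := by
  classical
  obtain ⟨T, hT⟩ := exists_isTransversal f
  have hTinf : T.Infinite := sigma_infinite hT hrf
  have i1 : Infinite (Set.range g : Set Ω) := hrg.to_subtype
  have i2 : Infinite (T : Set Ω) := hTinf.to_subtype
  have hcard : #(Set.range g : Set Ω) = #(T : Set Ω) := by
    rw [Cardinal.mk_eq_aleph0, Cardinal.mk_eq_aleph0]
  obtain ⟨eqv⟩ := Cardinal.eq.mp hcard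
  set a : Ω → Ω := fun x => (eqv ⟨g x, ⟨x, rfl⟩⟩ : Ω) with ha
  have hmem : ∀ x, a x ∈ T := fun x => (eqv ⟨g x, ⟨x, rfl⟩⟩).2
  have hka : ∀ x x', a x = a x' ↔ g x = g x' := by
    intro x x'
    constructor
    · intro h
      have := eqv.injective (Subtype.ext h)
      exact congrArg (fun z : (Set.range g : Set Ω) => (z : Ω)) this
    · intro h
      have he : (⟨g x, ⟨x, rfl⟩⟩ : (Set.range g : Set Ω)) = ⟨g x', ⟨x', rfl⟩⟩ :=
        Subtype.ext h
      rw [ha]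
      simp only
      rw [he]
  have hrangea : Set.range a = T := by
    apply Set.eq_of_subset_of_subset
    · rintro y ⟨x, rfl⟩; exact hmem x
    · intro σ hσ
      set u := eqv.symm ⟨σ, hσ⟩ with hu
      obtain ⟨x, hx⟩ := u.2
      refine ⟨x, ?_⟩
      have : (⟨g x, ⟨x, rfl⟩⟩ : (Set.range g : Set Ω)) = u := Subtype.ext hx
      rw [ha]
      simp only
      rw [this, hu, Equiv.apply_symm_apply]
  set h : Ω → Ω := fun x => f (a x) with hh
  have Hker : ∀ x x', h x = h x' ↔ g x = g x' := by
    intro x x'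
    constructor
    · intro hxy
      exact (hka x x').mp (hT.1 (hmem x) (hmem x') hxy)
    · intro hxy
      rw [hh]; simp only
      rw [(hka x x').mpr hxy]
  have hrangeh : Set.range h = Set.range f := by
    have : Set.range h = f '' Set.range a := Set.range_comp f a
    rw [this, hrangea, hT.2]
  obtain ⟨b, hb1, hb2, hb3, hb4⟩ := lemA h g Hker
  refine ⟨a, b, fun x => hb1 x, collapse_eq_of_ker hka, ?_, contract_le_of_ker hka, ?_, hb3, hb4⟩
  · rw [defect, hrangea, collapse_eq_mk_compl hT]
  · rw [hb2, hrangeh, defect]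
section
open Cardinal
variable {Ω : Type}

lemma lemC [Countable Ω] [Infinite Ω] (f g : Ω → Ω)
    (hkf : ({α : Ω | (f ⁻¹' {α}).Infinite} : Set Ω).Infinite)
    (hdf : ℵ₀ ≤ defect f)
    (hkg : ∃ β : Ω, (g ⁻¹' {β}).Infinite) :
    ∃ a b : Ω → Ω, (∀ x, b (f (a x)) = g x) ∧
      ℵ₀ ≤ collapse a ∧ ℵ₀ ≤ defect a ∧ contract a = 0 ∧
      ℵ₀ ≤ collapse b ∧ defect b = defect g ∧ contract b ≤ 1 := by
  classical
  obtain ⟨ρ, hρ⟩ := exists_injective_nat Ω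
  -- enumeration of infinite fibers of f
  set K : Set Ω := {α : Ω | (f ⁻¹' {α}).Infinite} with hK
  let eK : ℕ ↪ K := hkf.natEmbedding
  set κ : ℕ → Ω := fun n => (eK n : Ω) with hκ
  have hκinj : Function.Injective κ := fun m n h => eK.injective (Subtype.ext h)
  have hκK : ∀ n, (f ⁻¹' {κ n}).Infinite := fun n => (eK n).2
  set θ : Ω → Ω := fun z => κ (2 * ρ z) with hθ
  have hθinj : Function.Injective θ := by
    intro z z' h
    have := hκinj h
    exact hρ (by omega)
  have hθfib : ∀ z, (f ⁻¹' {θ z}).Infinite := fun z => hκK _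
  -- embeddings into the fibers
  let N : ∀ z : Ω, ℕ ↪ (f ⁻¹' {θ z} : Set Ω) := fun z => (hθfib z).natEmbedding
  -- class-adapted indexing u
  have Eex : ∀ β : Ω, (g ⁻¹' {β}).Infinite → Nonempty ((g ⁻¹' {β} : Set Ω) ≃ ℕ) := by
    intro β h
    have : Infinite (g ⁻¹' {β} : Set Ω) := h.to_subtype
    have h1 : #(g ⁻¹' {β} : Set Ω) = #ℕ := by
      rw [Cardinal.mk_nat]
      exact Cardinal.mk_eq_aleph0 _
    exact Cardinal.eq.mp h1
  let E : ∀ β : Ω, (g ⁻¹' {β}).Infinite → ((g ⁻¹' {β} : Set Ω) ≃ ℕ) :=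
    fun β h => (Eex β h).some
  set w : ∀ β : Ω, (g ⁻¹' {β} : Set Ω) → ℕ :=
    fun β => if h : (g ⁻¹' {β}).Infinite then (fun t => E β h t) else (fun t => ρ t.1)
    with hw
  have hw_inj : ∀ β : Ω, Function.Injective (w β) := by
    intro β
    rw [hw]
    by_cases h : (g ⁻¹' {β}).Infinite
    · simp only [dif_pos h]
      exact fun t t' ht => (E β h).injective ht
    · simp only [dif_neg h]
      exact fun t t' ht => Subtype.ext (hρ ht)
  have hw_surj : ∀ β : Ω, (g ⁻¹' {β}).Infinite → Function.Surjective (w β) := by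
    intro β h
    rw [hw]
    simp only [dif_pos h]
    exact (E β h).surjective
  have hw_congr : ∀ (β β' : Ω) (hb : β = β') (x : Ω) (p : x ∈ g ⁻¹' {β})
      (q : x ∈ g ⁻¹' {β'}), w β ⟨x, p⟩ = w β' ⟨x, q⟩ := by
    intro β β' hb x p q
    subst hb
    rfl
  have hxmem : ∀ x : Ω, x ∈ g ⁻¹' {g x} := fun x => Set.mem_preimage.mpr rfl
  set u : Ω → ℕ := fun x => w (g x) ⟨x, hxmem x⟩ with hu
  have hu_inj : ∀ x x', g x = g x' → u x = u x' → x = x' := by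
    intro x x' hgs huu
    have hmem' : x' ∈ g ⁻¹' {g x} := by rw [hgs]; exact hxmem x'
    have : u x' = w (g x) ⟨x', hmem'⟩ := hw_congr (g x') (g x) hgs.symm x' (hxmem x') hmem'
    rw [hu] at huu
    simp only at huu
    rw [hu] at this
    simp only at this
    rw [this] at huu
    have := hw_inj (g x) huu
    exact congrArg Subtype.val this
  have hu_surj : ∀ x, (g ⁻¹' {g x}).Infinite → ∀ n : ℕ, ∃ x', g x' = g x ∧ u x' = n := by
    intro x hinf n
    obtain ⟨t, ht⟩ := hw_surj (g x) hinf n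
    refine ⟨t.1, t.2, ?_⟩
    have h1 : u t.1 = w (g t.1) ⟨t.1, hxmem t.1⟩ := rfl
    have h2 : w (g t.1) ⟨t.1, hxmem t.1⟩ = w (g x) ⟨t.1, t.2⟩ :=
      hw_congr (g t.1) (g x) t.2 t.1 (hxmem t.1) t.2
    have h3 : (⟨t.1, t.2⟩ : (g ⁻¹' {g x} : Set Ω)) = t := Subtype.ext rfl
    rw [h1, h2, h3, ht]
  -- the map a
  set a : Ω → Ω := fun x => (N (g x) (u x / 2) : Ω) with ha
  have hfa : ∀ x, f (a x) = θ (g x) := by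
    intro x
    have := (N (g x) (u x / 2)).2
    exact this
  have Hker : ∀ x x', f (a x) = f (a x') ↔ g x = g x' := by
    intro x x'
    rw [hfa, hfa]
    exact ⟨fun h => hθinj h, fun h => by rw [h]⟩
  have ha3 : ∀ x x', a x = a x' → g x = g x' ∧ u x / 2 = u x' / 2 := by
    intro x x' haa
    have hgs : g x = g x' := (Hker x x').mp (by rw [haa])
    refine ⟨hgs, ?_⟩
    have : (N (g x') (u x' / 2) : Ω) = (N (g x) (u x' / 2) : Ω) := by rw [hgs]
    rw [ha] at haa
    simp only at haa
    rw [this] at haa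
    exact (N (g x)).injective (Subtype.ext haa)
  -- contract a = 0
  have hconta : contract a = 0 := by
    have hempty : ({α : Ω | (a ⁻¹' {α}).Infinite} : Set Ω) = ∅ := by
      rw [Set.eq_empty_iff_forall_notMem]
      intro α hα
      have : Finite (a ⁻¹' {α} : Set Ω) := by
        refine Finite.of_injective (fun t => (decide (u t.1 % 2 = 0) : Bool)) ?_
        intro t t' ht
        have h1 : a t.1 = α := t.2
        have h2 : a t.1 = a t'.1 := by rw [t.2, t'.2]
        obtain ⟨hgs, hdiv⟩ := ha3 _ _ h2
        have hiff := decide_eq_decide.mp ht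
        have hpar : u t.1 % 2 = u t'.1 % 2 := by
          by_cases h0 : u t.1 % 2 = 0
          · have := hiff.mp h0; omega
          · have : ¬ u t'.1 % 2 = 0 := fun hq => h0 (hiff.mpr hq); omega
        have : u t.1 = u t'.1 := by omega
        exact Subtype.ext (hu_inj _ _ hgs this)
      exact (Set.infinite_coe_iff.mpr hα).not_finite this
    rw [contract, hempty]
    simp
  -- defect a
  have hdefa : ℵ₀ ≤ defect a := by
    have hsub : f ⁻¹' {κ 1} ⊆ (Set.range a)ᶜ := by
      intro y hy
      rintro ⟨x, rfl⟩
      have h1 : f (a x) = κ 1 := hy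
      rw [hfa] at h1
      have := hκinj h1
      omega
    rw [defect] at *
    rw [Cardinal.aleph0_le_mk_iff]
    exact (((hκK 1).mono hsub)).to_subtype
  -- collapse a
  have hcola : ℵ₀ ≤ collapse a := by
    set T : Set Ω := {x | u x % 2 = 0 ∨ ∀ x', g x' = g x → u x' ≠ u x - 1} with hTdef
    have hTtrans : IsTransversal a T := by
      constructor
      · intro x hx x' hx' haa
        obtain ⟨hgs, hdiv⟩ := ha3 _ _ haa
        by_cases hne : u x = u x'
        · exact hu_inj _ _ hgs hne
        · exfalso
          rcases (by omega : u x % 2 = 0 ∧ u x' % 2 = 1 ∧ u x = u x' - 1 ∨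
              u x' % 2 = 0 ∧ u x % 2 = 1 ∧ u x' = u x - 1) with ⟨h1, h2, h3⟩ | ⟨h1, h2, h3⟩
          · rcases hx' with hc | hc
            · omega
            · exact hc x hgs h3
          · rcases hx with hc | hc
            · omega
            · exact hc x' hgs.symm h3
      · apply Set.eq_of_subset_of_subset (Set.image_subset_range _ _)
        rintro y ⟨x, rfl⟩
        by_cases he : u x % 2 = 0
        · exact ⟨x, Or.inl he, rfl⟩
        · by_cases hp : ∃ x', g x' = g x ∧ u x' = u x - 1
          · obtain ⟨x', hx'1, hx'2⟩ := hp
            refine ⟨x', Or.inl (by omega), ?_⟩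
            have hdiv : u x' / 2 = u x / 2 := by omega
            rw [ha]
            simp only
            rw [hx'1, hdiv]
          · push_neg at hp
            exact ⟨x, Or.inr fun x' h1 h2 => hp x' h1 h2, rfl⟩
    rw [collapse_eq_mk_compl hTtrans, Cardinal.aleph0_le_mk_iff]
    obtain ⟨β, hβ⟩ := hkg
    obtain ⟨x0, hx0⟩ := hβ.nonempty
    have hx0' : g x0 = β := hx0
    have hclass : (g ⁻¹' {g x0}).Infinite := by rw [hx0']; exact hβ
    have pick : ∀ n : ℕ, ∃ x', g x' = g x0 ∧ u x' = 2 * n + 1 :=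
      fun n => hu_surj x0 hclass (2 * n + 1)
    set ch : ℕ → Ω := fun n => (pick n).choose with hch
    have hch1 : ∀ n, g (ch n) = g x0 := fun n => (pick n).choose_spec.1
    have hch2 : ∀ n, u (ch n) = 2 * n + 1 := fun n => (pick n).choose_spec.2
    have hchT : ∀ n, ch n ∈ Tᶜ := by
      intro n
      intro hmem
      rcases hmem with hc | hc
      · have := hch2 n; omega
      · obtain ⟨x', hx'1, hx'2⟩ := hu_surj x0 hclass (2 * n)
        refine hc x' (by rw [hx'1, hch1 n]) ?_
        rw [hch2 n, hx'2]
        omega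
    refine Infinite.of_injective (fun n => (⟨ch n, hchT n⟩ : (Tᶜ : Set Ω))) ?_
    intro m n h
    have : ch m = ch n := congrArg Subtype.val h
    have := congrArg u this
    rw [hch2 m, hch2 n] at this
    omega
  -- b from lemA
  have : Nonempty Ω := inferInstance
  obtain ⟨b, hb1, hb2, hb3, hb4⟩ := lemA (fun x => f (a x)) g Hker
  refine ⟨a, b, hb1, hcola, hdefa, hconta, ?_, hb3, hb4⟩
  rw [hb2]
  refine le_trans hdf (Cardinal.mk_le_mk_of_subset ?_)
  intro y hy
  intro hmem
  obtain ⟨x, hx⟩ := hmem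
  exact hy ⟨a x, hx⟩
end

section glue
open Function
variable {Ω : Type} [Countable Ω] [Infinite Ω]


lemma memS_of_profile {x : Function.End Ω}
    (h : (collapse x = 0 ∧ defect x = 0) ∨
      (0 < collapse x ∧ collapse x < ℵ₀ ∧ 0 < defect x ∧ defect x < ℵ₀) ∨
      (ℵ₀ ≤ collapse x ∧ ℵ₀ ≤ defect x ∧ contract x < ℵ₀)) : x ∈ S12345 := by
  rcases h with ⟨hc, hd⟩ | ⟨hc1, hc2, hd1, hd2⟩ | ⟨hc, hd, hk⟩
  · refine ⟨⟨⟨⟨Or.inl hc, Or.inr hd⟩, Or.inl ?_⟩, Or.inr ?_⟩, ?_⟩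
    · rw [hc]; exact Cardinal.aleph0_pos
    · rw [hd]; exact Cardinal.aleph0_pos
    · show contract x < ℵ₀
      rw [contract_eq_zero_of_collapse_lt (f := x) (by rw [hc]; exact Cardinal.aleph0_pos)]
      exact Cardinal.aleph0_pos
  · refine ⟨⟨⟨⟨Or.inr hd1, Or.inl hc1⟩, Or.inl hc2⟩, Or.inr hd2⟩, ?_⟩
    show contract x < ℵ₀
    rw [contract_eq_zero_of_collapse_lt hc2]
    exact Cardinal.aleph0_pos
  · exact ⟨⟨⟨⟨Or.inr (lt_of_lt_of_le Cardinal.aleph0_pos hd),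
      Or.inl (lt_of_lt_of_le Cardinal.aleph0_pos hc)⟩, Or.inr hd⟩, Or.inl hc⟩, hk⟩

lemma range_infinite_of_defect_lt {g : Ω → Ω} (h : defect g < ℵ₀) :
    (Set.range g).Infinite := by
  rw [defect, Cardinal.lt_aleph0_iff_set_finite] at h
  have := h.infinite_compl
  rwa [compl_compl] at this

lemma range_infinite_of_collapse_lt {g : Ω → Ω} (h : collapse g < ℵ₀) :
    (Set.range g).Infinite := by
  obtain ⟨T, hT⟩ := exists_isTransversal g
  have hTinf : T.Infinite := sigma_infinite hT (Or.inr h)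
  have hbij : Set.BijOn g T (Set.range g) :=
    ⟨fun x _ => ⟨x, rfl⟩, hT.1, fun y hy => hT.2 ▸ hy⟩
  have hcard : #(T : Set Ω) = #(Set.range g : Set Ω) := Cardinal.mk_congr (Set.BijOn.equiv g hbij)
  rw [← Set.infinite_coe_iff, ← Cardinal.aleph0_le_mk_iff] at hTinf ⊢
  rwa [hcard] at hTinf

lemma genAux (i0 : Fin 5) {f g : Function.End Ω}
    (hf4 : ∀ j : Fin 5, j ≠ i0 → f ∈ (SS j : Set (Function.End Ω)))
    (hfn : f ∉ (S12345 : Set (Function.End Ω)))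
    (hg4 : ∀ j : Fin 5, j ≠ i0 → g ∈ (SS j : Set (Function.End Ω)))
    (hgn : g ∉ (S12345 : Set (Function.End Ω))) :
    ∃ a b : Function.End Ω, a ∈ (S12345 : Set (Function.End Ω)) ∧
      b ∈ (S12345 : Set (Function.End Ω)) ∧ g = b * (f * a) := by
  have hf5 : f ∉ (SS i0 : Set (Function.End Ω)) := by
    intro h5
    refine hfn ?_
    fin_cases i0
    · exact ⟨⟨⟨⟨h5, hf4 1 (by decide)⟩, hf4 2 (by decide)⟩, hf4 3 (by decide)⟩, hf4 4 (by decide)⟩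
    · exact ⟨⟨⟨⟨hf4 0 (by decide), h5⟩, hf4 2 (by decide)⟩, hf4 3 (by decide)⟩, hf4 4 (by decide)⟩
    · exact ⟨⟨⟨⟨hf4 0 (by decide), hf4 1 (by decide)⟩, h5⟩, hf4 3 (by decide)⟩, hf4 4 (by decide)⟩
    · exact ⟨⟨⟨⟨hf4 0 (by decide), hf4 1 (by decide)⟩, hf4 2 (by decide)⟩, h5⟩, hf4 4 (by decide)⟩
    · exact ⟨⟨⟨⟨hf4 0 (by decide), hf4 1 (by decide)⟩, hf4 2 (by decide)⟩, hf4 3 (by decide)⟩, h5⟩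
  have hg5 : g ∉ (SS i0 : Set (Function.End Ω)) := by
    intro h5
    refine hgn ?_
    fin_cases i0
    · exact ⟨⟨⟨⟨h5, hg4 1 (by decide)⟩, hg4 2 (by decide)⟩, hg4 3 (by decide)⟩, hg4 4 (by decide)⟩
    · exact ⟨⟨⟨⟨hg4 0 (by decide), h5⟩, hg4 2 (by decide)⟩, hg4 3 (by decide)⟩, hg4 4 (by decide)⟩
    · exact ⟨⟨⟨⟨hg4 0 (by decide), hg4 1 (by decide)⟩, h5⟩, hg4 3 (by decide)⟩, hg4 4 (by decide)⟩
    · exact ⟨⟨⟨⟨hg4 0 (by decide), hg4 1 (by decide)⟩, hg4 2 (by decide)⟩, h5⟩, hg4 4 (by decide)⟩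
    · exact ⟨⟨⟨⟨hg4 0 (by decide), hg4 1 (by decide)⟩, hg4 2 (by decide)⟩, hg4 3 (by decide)⟩, h5⟩
  fin_cases i0
  -- case i0 = 0 : drop S1; f,g surjective-noninjective with finite collapse
  · have pf : ∀ x : Function.End Ω, x ∉ (SS (0 : Fin 5) : Set (Function.End Ω)) →
        x ∈ (SS (2 : Fin 5) : Set (Function.End Ω)) →
        collapse x ≠ 0 ∧ collapse x < ℵ₀ ∧ defect x = 0 := by
      intro x h5 h3
      have h1 : ¬ (collapse x = 0 ∨ 0 < defect x) := h5
      push_neg at h1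
      obtain ⟨hc, hd⟩ := h1
      have hd0 : defect x = 0 := le_zero_iff.mp hd
      have h3' : collapse x < ℵ₀ ∨ ℵ₀ ≤ defect x := h3
      rcases h3' with h | h
      · exact ⟨hc, h, hd0⟩
      · rw [hd0] at h; exact absurd h (by simp [Cardinal.aleph0_ne_zero])
    obtain ⟨hfc, hfc2, hfd⟩ := pf f hf5 (hf4 2 (by decide))
    obtain ⟨hgc, hgc2, hgd⟩ := pf g hg5 (hg4 2 (by decide))
    obtain ⟨a, b, hab, ha1, ha2, ha3, hb1, hb2, hb3⟩ :=
      lemB f g (Or.inr hfc2) (range_infinite_of_defect_lt (by rw [hgd]; exact Cardinal.aleph0_pos))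
    refine ⟨a, b, ?_, ?_, funext fun x => (hab x).symm⟩
    · refine memS_of_profile (Or.inr (Or.inl ?_))
      rw [ha1, ha2]
      exact ⟨pos_iff_ne_zero.mpr hgc, hgc2, pos_iff_ne_zero.mpr hfc, hfc2⟩
    · refine memS_of_profile (Or.inl ?_)
      rw [hb1, hb2, hfd, hgd]; exact ⟨rfl, rfl⟩
  -- case i0 = 1 : drop S2; f,g injective non-surjective with finite defect
  · have pf : ∀ x : Function.End Ω, x ∉ (SS (1 : Fin 5) : Set (Function.End Ω)) →
        x ∈ (SS (3 : Fin 5) : Set (Function.End Ω)) →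
        collapse x = 0 ∧ defect x ≠ 0 ∧ defect x < ℵ₀ := by
      intro x h5 h4
      have h1 : ¬ (0 < collapse x ∨ defect x = 0) := h5
      push_neg at h1
      obtain ⟨hc, hd⟩ := h1
      have hc0 : collapse x = 0 := le_zero_iff.mp hc
      have h4' : ℵ₀ ≤ collapse x ∨ defect x < ℵ₀ := h4
      rcases h4' with h | h
      · rw [hc0] at h; exact absurd h (by simp [Cardinal.aleph0_ne_zero])
      · exact ⟨hc0, hd, h⟩
    obtain ⟨hfc, hfd, hfd2⟩ := pf f hf5 (hf4 3 (by decide))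
    obtain ⟨hgc, hgd, hgd2⟩ := pf g hg5 (hg4 3 (by decide))
    obtain ⟨a, b, hab, ha1, ha2, ha3, hb1, hb2, hb3⟩ :=
      lemB f g (Or.inr (by rw [hfc]; exact Cardinal.aleph0_pos)) (range_infinite_of_defect_lt hgd2)
    refine ⟨a, b, ?_, ?_, funext fun x => (hab x).symm⟩
    · refine memS_of_profile (Or.inl ?_)
      rw [ha1, ha2, hfc, hgc]; exact ⟨rfl, rfl⟩
    · refine memS_of_profile (Or.inr (Or.inl ?_))
      rw [hb1, hb2]
      exact ⟨pos_iff_ne_zero.mpr hfd, hfd2, pos_iff_ne_zero.mpr hgd, hgd2⟩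
  -- case i0 = 2 : drop S3; c = ∞, 0 < d < ∞, k < ∞
  · have pf : ∀ x : Function.End Ω, x ∉ (SS (2 : Fin 5) : Set (Function.End Ω)) →
        x ∈ (SS (0 : Fin 5) : Set (Function.End Ω)) →
        x ∈ (SS (4 : Fin 5) : Set (Function.End Ω)) →
        ℵ₀ ≤ collapse x ∧ defect x ≠ 0 ∧ defect x < ℵ₀ ∧ contract x < ℵ₀ := by
      intro x h5 h1 hk
      have h3 : ¬ (collapse x < ℵ₀ ∨ ℵ₀ ≤ defect x) := h5
      push_neg at h3
      obtain ⟨hc, hd⟩ := h3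
      have hc' : ℵ₀ ≤ collapse x := hc
      have h1' : collapse x = 0 ∨ 0 < defect x := h1
      rcases h1' with h | h
      · rw [h] at hc'; exact absurd hc' (by simp [Cardinal.aleph0_ne_zero])
      · exact ⟨hc', pos_iff_ne_zero.mp h, hd, hk⟩
    obtain ⟨hfc, hfd, hfd2, hfk⟩ := pf f hf5 (hf4 0 (by decide)) (hf4 4 (by decide))
    obtain ⟨hgc, hgd, hgd2, hgk⟩ := pf g hg5 (hg4 0 (by decide)) (hg4 4 (by decide))
    obtain ⟨a, b, hab, ha1, ha2, ha3, hb1, hb2, hb3⟩ :=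
      lemB f g (Or.inl (range_infinite_of_defect_lt hfd2)) (range_infinite_of_defect_lt hgd2)
    refine ⟨a, b, ?_, ?_, funext fun x => (hab x).symm⟩
    · refine memS_of_profile (Or.inr (Or.inr ?_))
      rw [ha1, ha2]
      exact ⟨hgc, hfc, lt_of_le_of_lt ha3 hgk⟩
    · refine memS_of_profile (Or.inr (Or.inl ?_))
      rw [hb1, hb2]
      exact ⟨pos_iff_ne_zero.mpr hfd, hfd2, pos_iff_ne_zero.mpr hgd, hgd2⟩
  -- case i0 = 3 : drop S4; 0 < c < ∞, d = ∞
  · have pf : ∀ x : Function.End Ω, x ∉ (SS (3 : Fin 5) : Set (Function.End Ω)) →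
        x ∈ (SS (1 : Fin 5) : Set (Function.End Ω)) →
        collapse x ≠ 0 ∧ collapse x < ℵ₀ ∧ ℵ₀ ≤ defect x := by
      intro x h5 h2
      have h4 : ¬ (ℵ₀ ≤ collapse x ∨ defect x < ℵ₀) := h5
      push_neg at h4
      obtain ⟨hc, hd⟩ := h4
      have hd' : ℵ₀ ≤ defect x := hd
      have h2' : 0 < collapse x ∨ defect x = 0 := h2
      rcases h2' with h | h
      · exact ⟨pos_iff_ne_zero.mp h, hc, hd'⟩
      · rw [h] at hd'; exact absurd hd' (by simp [Cardinal.aleph0_ne_zero])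
    obtain ⟨hfc, hfc2, hfd⟩ := pf f hf5 (hf4 1 (by decide))
    obtain ⟨hgc, hgc2, hgd⟩ := pf g hg5 (hg4 1 (by decide))
    obtain ⟨a, b, hab, ha1, ha2, ha3, hb1, hb2, hb3⟩ :=
      lemB f g (Or.inr hfc2) (range_infinite_of_collapse_lt hgc2)
    refine ⟨a, b, ?_, ?_, funext fun x => (hab x).symm⟩
    · refine memS_of_profile (Or.inr (Or.inl ?_))
      rw [ha1, ha2]
      exact ⟨pos_iff_ne_zero.mpr hgc, hgc2, pos_iff_ne_zero.mpr hfc, hfc2⟩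
    · refine memS_of_profile (Or.inr (Or.inr ?_))
      rw [hb1, hb2]
      exact ⟨hfd, hgd, lt_of_le_of_lt hb3 Cardinal.one_lt_aleph0⟩
  -- case i0 = 4 : drop S5; k = ∞
  · have pf : ∀ x : Function.End Ω, x ∉ (SS (4 : Fin 5) : Set (Function.End Ω)) →
        x ∈ (SS (2 : Fin 5) : Set (Function.End Ω)) →
        ({α : Ω | (x ⁻¹' {α}).Infinite} : Set Ω).Infinite ∧ ℵ₀ ≤ defect x ∧
          (∃ β : Ω, (x ⁻¹' {β}).Infinite) := by
      intro x h5 h3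
      have hk : ℵ₀ ≤ contract x := not_lt.mp h5
      have hKinf : ({α : Ω | (x ⁻¹' {α}).Infinite} : Set Ω).Infinite := by
        rw [← Set.infinite_coe_iff]
        exact Cardinal.aleph0_le_mk_iff.mp hk
      obtain ⟨β, hβ⟩ := hKinf.nonempty
      have hc : ℵ₀ ≤ collapse x := aleph0_le_collapse_of_infinite_fiber hβ
      have h3' : collapse x < ℵ₀ ∨ ℵ₀ ≤ defect x := h3
      rcases h3' with h | h
      · exact absurd hc (not_le.mpr h)
      · exact ⟨hKinf, h, ⟨β, hβ⟩⟩
    obtain ⟨hfK, hfd, _⟩ := pf f hf5 (hf4 2 (by decide))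
    obtain ⟨_, hgd, hgβ⟩ := pf g hg5 (hg4 2 (by decide))
    obtain ⟨a, b, hab, ha1, ha2, ha3, hb1, hb2, hb3⟩ := lemC f g hfK hfd hgβ
    refine ⟨a, b, ?_, ?_, funext fun x => (hab x).symm⟩
    · refine memS_of_profile (Or.inr (Or.inr ?_))
      refine ⟨ha1, ha2, ?_⟩
      rw [ha3]; exact Cardinal.aleph0_pos
    · refine memS_of_profile (Or.inr (Or.inr ?_))
      rw [hb2]
      exact ⟨hb1, hgd, lt_of_le_of_lt hb3 Cardinal.one_lt_aleph0⟩

end glue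
end Aux

/-- `S_{1,2,3,4,5}` is maximal in `S_I` for every four-element subset `I` of
`{1,2,3,4,5}`. -/
theorem stmt19 (Ω : Type) [Countable Ω] [Infinite Ω] :
    ∀ I : Finset (Fin 5), I.card = 4 →
      ¬ ∃ T : Set (Function.End Ω),
          (∀ a ∈ T, ∀ b ∈ T, a * b ∈ T) ∧ S12345 ⊂ T ∧ T ⊂ ⋂ i ∈ I, SS i := by
  intro I hI
  rintro ⟨T, hmul, hss1, hss2⟩
  rw [Set.ssubset_def] at hss1 hss2
  obtain ⟨hsub1, hne1⟩ := hss1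
  obtain ⟨hsub2, hne2⟩ := hss2
  obtain ⟨i0, hi0⟩ : ∃ i0 : Fin 5, i0 ∉ I := by
    by_contra hno
    push_neg at hno
    have : I = Finset.univ := Finset.eq_univ_iff_forall.mpr hno
    rw [this] at hI
    simp [Finset.card_univ] at hI
  have hIe : I = Finset.univ.erase i0 := by
    apply Finset.eq_of_subset_of_card_le
    · intro j hj
      exact Finset.mem_erase.mpr ⟨fun h => hi0 (h ▸ hj), Finset.mem_univ j⟩
    · rw [Finset.card_erase_of_mem (Finset.mem_univ i0), hI]
      simp [Finset.card_univ]
  subst hIe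
  have hmem_iff : ∀ x : Function.End Ω,
      x ∈ (⋂ i ∈ Finset.univ.erase i0, SS i : Set (Function.End Ω)) ↔
        ∀ j : Fin 5, j ≠ i0 → x ∈ (SS j : Set (Function.End Ω)) := by
    intro x
    rw [Set.mem_iInter₂]
    constructor
    · intro h j hj
      exact h j (Finset.mem_erase.mpr ⟨hj, Finset.mem_univ j⟩)
    · intro h j hj
      exact h j (Finset.mem_erase.mp hj).1
  obtain ⟨f, hfT, hfn⟩ := Set.not_subset.mp hne1
  have hf4 := (hmem_iff f).mp (hsub2 hfT)
  refine hne2 ?_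
  intro g hg
  by_cases hgS : g ∈ (S12345 : Set (Function.End Ω))
  · exact hsub1 hgS
  · obtain ⟨a, b, ha, hb, heq⟩ := genAux i0 hf4 hfn ((hmem_iff g).mp hg) hgS
    rw [heq]
    exact hmul b (hsub1 hb) (f * a) (hmul f hfT a (hsub1 ha))
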